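/- If F ∈ End(W) is a diagonal matrix diag(α,β,γ,δ) satisfying (id_W ⊗ F) ∘ R_1 = R_1 ∘ (F ⊗ id_W), then α = β = γ = δ, i.e. F is a scalar multiple of the identity. -/

import Mathlib

open Matrix Kronecker

noncomputable section

variable {K : Type*} [Field K]

/-- The rigid R-matrix `R_r` of the `V₁`-polynomial, in the basis `(e_i ⊗ e_j)` of `W ⊗ W` (entry function: row pair `(k,l)` then column pair `(i,j)`, 0-based). -/
def RV1E (t0 t1 r : K) : ℕ → ℕ → ℕ → ℕ → K
  | 0, 0, 0, 0 => -1
  | 0, 1, 1, 0 => -1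
  | 1, 0, 0, 1 => -t0
  | 1, 0, 1, 0 => t0 - 1
  | 0, 2, 2, 0 => -1
  | 2, 0, 0, 2 => -t1
  | 2, 0, 2, 0 => t1 - 1
  | 1, 1, 1, 1 => t0
  | 2, 2, 2, 2 => t1
  | 0, 3, 3, 0 => -1
  | 1, 2, 2, 1 => -(r⁻¹ * t1⁻¹)
  | 1, 2, 3, 0 => t1⁻¹ - 1
  | 2, 1, 1, 2 => -(r * t1)
  | 2, 1, 3, 0 => r * (t1 - 1)
  | 3, 0, 0, 3 => -(t0 * t1)
  | 3, 0, 1, 2 => t1 * (t0 - 1)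
  | 3, 0, 2, 1 => (1 - t0) * r⁻¹
  | 3, 0, 3, 0 => t0 + t1 - 2
  | 1, 3, 3, 1 => r⁻¹ * t1⁻¹
  | 3, 1, 1, 3 => r * t0 * t1
  | 3, 1, 3, 1 => t0 - 1
  | 2, 3, 3, 2 => r * t1
  | 3, 2, 2, 3 => r⁻¹
  | 3, 2, 3, 2 => t1 - 1
  | 3, 3, 3, 3 => -1
  | _, _, _, _ => 0

/-- The rigid R-matrix `R_r` of the `V₁`-polynomial, in the basis `(e_i ⊗ e_j)` of `W ⊗ W`. -/
def RV1 (t0 t1 r : K) : Matrix (Fin 4 × Fin 4) (Fin 4 × Fin 4) K :=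
  Matrix.of fun p q => RV1E t0 t1 r p.1.val p.2.val q.1.val q.2.val

/-- The function field `ℚ(x0,x1)`. -/
abbrev K11 : Type := FractionRing (MvPolynomial (Fin 2) ℚ)

/-- The variable `t₀` of `ℚ(t₀,t₁)`. -/
def t0V : K11 := algebraMap (MvPolynomial (Fin 2) ℚ) K11 (MvPolynomial.X 0)
/-- The variable `t₁` of `ℚ(t₀,t₁)`. -/
def t1V : K11 := algebraMap (MvPolynomial (Fin 2) ℚ) K11 (MvPolynomial.X 1)


lemma X_sub_one_ne (i : Fin 2) :
    (algebraMap (MvPolynomial (Fin 2) ℚ) K11 (MvPolynomial.X i)) - 1 ≠ 0 := by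
  have h1 : (1 : K11) = algebraMap (MvPolynomial (Fin 2) ℚ) K11 1 := by simp
  rw [h1, ← map_sub]
  rw [map_ne_zero_iff _ (IsFractionRing.injective _ _)]
  intro h
  have := congrArg (MvPolynomial.coeff 0) h
  simp [MvPolynomial.coeff_X] at this

/-- a diagonal `F = diag(a₁,a₂,a₃,a₄)` with `(id⊗F)∘R₁ = R₁∘(F⊗id)`
is a scalar multiple of the identity. -/
theorem V1_P1 (a1 a2 a3 a4 : K11)
    (hF : ((1 : Matrix (Fin 4) (Fin 4) K11) ⊗ₖ Matrix.diagonal ![a1, a2, a3, a4]) * RV1 t0V t1V 1 =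
      RV1 t0V t1V 1 * ((Matrix.diagonal ![a1, a2, a3, a4]) ⊗ₖ (1 : Matrix (Fin 4) (Fin 4) K11))) :
    a1 = a2 ∧ a2 = a3 ∧ a3 = a4 := by
  set v : Fin 4 → K11 := ![a1, a2, a3, a4] with hv
  have hL : ((1 : Matrix (Fin 4) (Fin 4) K11) ⊗ₖ Matrix.diagonal v)
      = Matrix.diagonal (fun p : Fin 4 × Fin 4 => v p.2) := by
    rw [← Matrix.diagonal_one, Matrix.diagonal_kronecker_diagonal]
    simp
  have hR : ((Matrix.diagonal v) ⊗ₖ (1 : Matrix (Fin 4) (Fin 4) K11))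
      = Matrix.diagonal (fun p : Fin 4 × Fin 4 => v p.1) := by
    rw [← Matrix.diagonal_one, Matrix.diagonal_kronecker_diagonal]
    simp
  rw [hL, hR] at hF
  have key : ∀ p q : Fin 4 × Fin 4,
      v p.2 * RV1 t0V t1V 1 p q = RV1 t0V t1V 1 p q * v q.1 := by
    intro p q
    have := congrFun (congrFun hF p) q
    rwa [Matrix.diagonal_mul, Matrix.mul_diagonal] at this
  have ht0 : t0V - 1 ≠ 0 := X_sub_one_ne 0
  have ht1 : t1V - 1 ≠ 0 := X_sub_one_ne 1
  have e1 := key ((1 : Fin 4), (0 : Fin 4)) ((1 : Fin 4), (0 : Fin 4))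
  have e2 := key ((2 : Fin 4), (0 : Fin 4)) ((2 : Fin 4), (0 : Fin 4))
  have e3 := key ((3 : Fin 4), (1 : Fin 4)) ((3 : Fin 4), (1 : Fin 4))
  have r1 : RV1 t0V t1V 1 ((1 : Fin 4), (0 : Fin 4)) ((1 : Fin 4), (0 : Fin 4)) = t0V - 1 := rfl
  have r2 : RV1 t0V t1V 1 ((2 : Fin 4), (0 : Fin 4)) ((2 : Fin 4), (0 : Fin 4)) = t1V - 1 := rfl
  have r3 : RV1 t0V t1V 1 ((3 : Fin 4), (1 : Fin 4)) ((3 : Fin 4), (1 : Fin 4)) = t0V - 1 := rfl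
  rw [r1] at e1; rw [r2] at e2; rw [r3] at e3
  simp only [hv] at e1 e2 e3
  norm_num [Matrix.cons_val_zero, Matrix.cons_val_one] at e1 e2 e3
  have v2 : ![a1, a2, a3, a4] 2 = a3 := rfl
  have v3 : ![a1, a2, a3, a4] 3 = a4 := rfl
  have h12 : a1 = a2 := mul_right_cancel₀ ht0 (by linear_combination e1)
  have h13 : a1 = a3 := mul_right_cancel₀ ht1 (by linear_combination e2 + (t1V - 1) * v2)
  have h24 : a2 = a4 := mul_right_cancel₀ ht0 (by linear_combination e3 + (t0V - 1) * v3)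
  exact ⟨h12, h12 ▸ h13, by rw [← h13, h12, h24]⟩
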